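/- Let λ ∈ ℂ with Re(λ) ≥ 0, and consider v ∈ C₀(ℝ₊;ℂ) solving v - 2v'' + v'''' = 0 on (0,∞), σ ∈ ℂ with the boundary conditions -½sin(α)(v'(0) - v'''(0)) + λσ + b sin(α)σ = 0, -v(0) + v''(0) = 0, and v(0) = σ, where α ∈ (0,π), b > 0. Then (v, σ) = (0, 0). -/

import Mathlib

open Real

noncomputable section Stmt16Aux

/-- derivative helper for `(a+b t) e^{-t}` -/
lemma stmt16_hA (a b : ℂ) (y : ℝ) :
    HasDerivAt (fun t : ℝ => (a + b*(t:ℂ)) * Complex.exp (-(t:ℂ)))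
      ((b - a - b*(y:ℂ)) * Complex.exp (-(y:ℂ))) y := by
  have h1 : HasDerivAt (fun t : ℝ => (t:ℂ)) 1 y := by
    exact Complex.ofRealCLM.hasDerivAt (x := y)
  have hpoly : HasDerivAt (fun t : ℝ => a + b*(t:ℂ)) b y := by
    simpa using (h1.const_mul b).const_add a
  have hexp : HasDerivAt (fun t : ℝ => Complex.exp (-(t:ℂ)))
      (Complex.exp (-(y:ℂ)) * (-1)) y :=
    (Complex.hasDerivAt_exp (-(y:ℂ))).comp y h1.neg
  have := hpoly.mul hexp
  exact this.congr_deriv (by ring)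

/-- derivative helper for `(a+b t) e^{t}` -/
lemma stmt16_hB (a b : ℂ) (y : ℝ) :
    HasDerivAt (fun t : ℝ => (a + b*(t:ℂ)) * Complex.exp ((t:ℂ)))
      ((b + a + b*(y:ℂ)) * Complex.exp ((y:ℂ))) y := by
  have h1 : HasDerivAt (fun t : ℝ => (t:ℂ)) 1 y := by
    exact Complex.ofRealCLM.hasDerivAt (x := y)
  have hpoly : HasDerivAt (fun t : ℝ => a + b*(t:ℂ)) b y := by
    simpa using (h1.const_mul b).const_add a
  have hexp : HasDerivAt (fun t : ℝ => Complex.exp ((t:ℂ)))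
      (Complex.exp ((y:ℂ)) * 1) y :=
    (Complex.hasDerivAt_exp ((y:ℂ))).comp y h1
  have := hpoly.mul hexp
  exact this.congr_deriv (by ring)

/-- The first-order system for `v'''' = 2 v'' - v`. -/
def stmt16F : (ℂ × ℂ × ℂ × ℂ) →L[ℝ] (ℂ × ℂ × ℂ × ℂ) :=
  letI p0 : (ℂ × ℂ × ℂ × ℂ) →L[ℝ] ℂ := ContinuousLinearMap.fst ℝ ℂ (ℂ × ℂ × ℂ)
  letI q : (ℂ × ℂ × ℂ × ℂ) →L[ℝ] (ℂ × ℂ × ℂ) := ContinuousLinearMap.snd ℝ ℂ (ℂ × ℂ × ℂ)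
  letI p1 : (ℂ × ℂ × ℂ × ℂ) →L[ℝ] ℂ := (ContinuousLinearMap.fst ℝ ℂ (ℂ × ℂ)).comp q
  letI q2 : (ℂ × ℂ × ℂ × ℂ) →L[ℝ] (ℂ × ℂ) := (ContinuousLinearMap.snd ℝ ℂ (ℂ × ℂ)).comp q
  letI p2 : (ℂ × ℂ × ℂ × ℂ) →L[ℝ] ℂ := (ContinuousLinearMap.fst ℝ ℂ ℂ).comp q2
  letI p3 : (ℂ × ℂ × ℂ × ℂ) →L[ℝ] ℂ := (ContinuousLinearMap.snd ℝ ℂ ℂ).comp q2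
  p1.prod (p2.prod (p3.prod ((2:ℝ) • p2 - p0)))

lemma stmt16F_apply (x : ℂ × ℂ × ℂ × ℂ) :
    stmt16F x = (x.2.1, x.2.2.1, x.2.2.2, 2 * x.2.2.1 - x.1) := by
  simp [stmt16F, ContinuousLinearMap.prod_apply, Complex.real_smul]

/-- Uniqueness for linear ODE systems on `[0,∞)`. -/
lemma stmt16_unique (f g : ℝ → ℂ × ℂ × ℂ × ℂ)
    (hf : ∀ t, 0 ≤ t → HasDerivAt f (stmt16F (f t)) t)
    (hg : ∀ t, 0 ≤ t → HasDerivAt g (stmt16F (g t)) t)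
    (h0 : f 0 = g 0) : ∀ t, 0 ≤ t → f t = g t := by
  intro t ht
  have := ODE_solution_unique (v := fun _ x => stmt16F x) (K := ‖stmt16F‖₊)
    (fun _ => stmt16F.lipschitz)
    (f := f) (g := g) (a := 0) (b := t)
    (fun s hs => ((hf s hs.1).continuousAt).continuousWithinAt)
    (fun s hs => (hf s hs.1).hasDerivWithinAt)
    (fun s hs => ((hg s hs.1).continuousAt).continuousWithinAt)
    (fun s hs => (hg s hs.1).hasDerivWithinAt)
    h0
  exact this ⟨ht, le_rfl⟩

end Stmt16Aux

/-- A decaying solution of `v - 2 v'' + v'''' = 0` on `(0,∞)` with boundary conditions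
`-½ sin α (v'(0) - v'''(0)) + λσ + b sin α σ = 0`, `-v(0) + v''(0) = 0`, `v(0) = σ`,
where `Re λ ≥ 0`, `α ∈ (0,π)`, `b > 0`, is trivial. -/
theorem stmt16 (l : ℂ) (α b : ℝ) (σ : ℂ) (v : ℝ → ℂ)
    (hlre : 0 ≤ l.re) (hα : α ∈ Set.Ioo 0 π) (hb : 0 < b)
    (hsmooth : ContDiff ℝ 4 v)
    (hdecay : Filter.Tendsto v Filter.atTop (nhds 0))
    (hode : ∀ y : ℝ, 0 < y →
      v y - 2 * deriv^[2] v y + deriv^[4] v y = 0)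
    (hbc0 : -(1 / 2 : ℂ) * (Real.sin α : ℂ) * (deriv v 0 - deriv^[3] v 0)
        + l * σ + (b : ℂ) * (Real.sin α : ℂ) * σ = 0)
    (hbc1 : -v 0 + deriv^[2] v 0 = 0)
    (hbc2 : v 0 = σ) :
    (∀ y : ℝ, 0 ≤ y → v y = 0) ∧ σ = 0 := by
  -- the ODE also holds at 0 by continuity
  have hv4 : ContDiff ℝ ((4:ℕ) : ℕ∞) v := by exact_mod_cast hsmooth
  have hsm : ∀ n k : ℕ, n + k ≤ 4 → ContDiff ℝ ((n:ℕ) : ℕ∞) (deriv^[k] v) := by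
    intro n k h
    have h1 : ContDiff ℝ ((n + k : ℕ) : ℕ∞) v := hv4.of_le (by exact_mod_cast h)
    exact ContDiff.iterate_deriv' n k h1
  have hcont : ∀ k : ℕ, k ≤ 4 → Continuous (deriv^[k] v) := by
    intro k hk
    exact (hsm 0 k (by omega)).continuous
  have hode' : ∀ y : ℝ, 0 ≤ y → deriv^[4] v y = 2 * deriv^[2] v y - v y := by
    intro y hy
    rcases eq_or_lt_of_le hy with h | h
    · -- y = 0; use continuity
      subst h
      have hW : Continuous (fun y => v y - 2 * deriv^[2] v y + deriv^[4] v y) := by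
        have h0 := hcont 0 (by norm_num)
        have h2 := hcont 2 (by norm_num)
        have h4 := hcont 4 (by norm_num)
        exact ((h0.sub (continuous_const.mul h2)).add h4)
      have h1 : Filter.Tendsto (fun y => v y - 2 * deriv^[2] v y + deriv^[4] v y)
          (nhdsWithin 0 (Set.Ioi 0)) (nhds (v 0 - 2 * deriv^[2] v 0 + deriv^[4] v 0)) :=
        (hW.continuousAt).continuousWithinAt
      have h2 : Filter.Tendsto (fun y => v y - 2 * deriv^[2] v y + deriv^[4] v y)
          (nhdsWithin 0 (Set.Ioi 0)) (nhds 0) := by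
        apply Filter.Tendsto.congr' _ tendsto_const_nhds
        filter_upwards [self_mem_nhdsWithin] with y hy
        exact (hode y hy).symm
      have := tendsto_nhds_unique h1 h2
      linear_combination this
    · linear_combination hode y h
  -- set up initial data
  set a0 := v 0 with ha0
  set a1 := deriv v 0 with ha1
  set a2 := deriv^[2] v 0 with ha2
  set a3 := deriv^[3] v 0 with ha3
  set c1 : ℂ := (2*a0 - 3*a1 + a3)/4 with hc1
  set c2 : ℂ := (a3 - a1 - a2 + a0)/4 with hc2
  set c3 : ℂ := (2*a0 + 3*a1 - a3)/4 with hc3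
  set c4 : ℂ := (a3 - a1 + a2 - a0)/4 with hc4
  -- candidate solution components
  set g0 : ℝ → ℂ := fun y => (c1 + c2*(y:ℂ)) * Complex.exp (-(y:ℂ)) + (c3 + c4*(y:ℂ)) * Complex.exp ((y:ℂ)) with hg0
  set g1 : ℝ → ℂ := fun y => (c2 - c1 + (-c2)*(y:ℂ)) * Complex.exp (-(y:ℂ)) + (c3 + c4 + c4*(y:ℂ)) * Complex.exp ((y:ℂ)) with hg1
  set g2 : ℝ → ℂ := fun y => (c1 - 2*c2 + c2*(y:ℂ)) * Complex.exp (-(y:ℂ)) + (c3 + 2*c4 + c4*(y:ℂ)) * Complex.exp ((y:ℂ)) with hg2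
  set g3 : ℝ → ℂ := fun y => (3*c2 - c1 + (-c2)*(y:ℂ)) * Complex.exp (-(y:ℂ)) + (c3 + 3*c4 + c4*(y:ℂ)) * Complex.exp ((y:ℂ)) with hg3
  set G : ℝ → ℂ × ℂ × ℂ × ℂ := fun y => (g0 y, g1 y, g2 y, g3 y) with hG
  set Fv : ℝ → ℂ × ℂ × ℂ × ℂ := fun y => (v y, deriv v y, deriv^[2] v y, deriv^[3] v y) with hFv
  -- v-side has derivative
  have hvk : ∀ k : ℕ, k ≤ 3 → ∀ t : ℝ, HasDerivAt (deriv^[k] v) (deriv^[k+1] v t) t := by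
    intro k hk t
    have hd : DifferentiableAt ℝ (deriv^[k] v) t := by
      have h1 := hsm 1 k (by omega)
      exact (h1.differentiable (by simp)) t
    have heq : deriv^[k+1] v = deriv (deriv^[k] v) := Function.iterate_succ_apply' deriv k v
    rw [heq]
    exact hd.hasDerivAt
  have hFv' : ∀ t : ℝ, 0 ≤ t → HasDerivAt Fv (stmt16F (Fv t)) t := by
    intro t ht
    rw [stmt16F_apply]
    have h0 := hvk 0 (by norm_num) t
    have h1 := hvk 1 (by norm_num) t
    have h2 := hvk 2 (by norm_num) t
    have h3 := hvk 3 (by norm_num) t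
    rw [hode' t ht] at h3
    simp only [Function.iterate_zero_apply, Function.iterate_one] at h0 h1 h2 h3 ⊢
    exact (h0.prodMk (h1.prodMk (h2.prodMk h3)))
  -- G-side has derivative
  have hG' : ∀ t : ℝ, 0 ≤ t → HasDerivAt G (stmt16F (G t)) t := by
    intro t _
    rw [stmt16F_apply]
    have d0 : HasDerivAt g0 (g1 t) t := by
      have := (stmt16_hA c1 c2 t).add (stmt16_hB c3 c4 t)
      exact this.congr_deriv (by simp only [hg1]; ring)
    have d1 : HasDerivAt g1 (g2 t) t := by
      have := (stmt16_hA (c2 - c1) (-c2) t).add (stmt16_hB (c3 + c4) c4 t)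
      exact this.congr_deriv (by simp only [hg2]; ring)
    have d2 : HasDerivAt g2 (g3 t) t := by
      have := (stmt16_hA (c1 - 2*c2) c2 t).add (stmt16_hB (c3 + 2*c4) c4 t)
      exact this.congr_deriv (by simp only [hg3]; ring)
    have d3 : HasDerivAt g3 (2 * g2 t - g0 t) t := by
      have := (stmt16_hA (3*c2 - c1) (-c2) t).add (stmt16_hB (c3 + 3*c4) c4 t)
      exact this.congr_deriv (by simp only [hg2, hg0]; ring)
    exact (d0.prodMk (d1.prodMk (d2.prodMk d3)))
  -- initial values agree
  have h00 : Fv 0 = G 0 := by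
    simp only [hFv, hG, hg0, hg1, hg2, hg3, Complex.ofReal_zero, neg_zero, Complex.exp_zero]
    simp only [Prod.mk.injEq, ← ha0, ← ha1, ← ha2, ← ha3]
    refine ⟨?_, ?_, ?_, ?_⟩ <;>
      · rw [hc1, hc2, hc3, hc4]; ring
  have huniq := stmt16_unique Fv G hFv' hG' h00
  have hveq : ∀ y : ℝ, 0 ≤ y → v y = g0 y := by
    intro y hy
    have := huniq y hy
    exact congrArg Prod.fst this
  -- decay: transfer to g0
  have hgdecay : Filter.Tendsto g0 Filter.atTop (nhds 0) := by
    apply hdecay.congr'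
    filter_upwards [Filter.eventually_ge_atTop (0:ℝ)] with y hy
    exact hveq y hy
  -- exp(-y) → 0 in ℂ
  have hexp0 : Filter.Tendsto (fun y : ℝ => Complex.exp (-(y:ℂ))) Filter.atTop (nhds 0) := by
    have : Filter.Tendsto (fun y : ℝ => Real.exp (-y)) Filter.atTop (nhds 0) :=
      Real.tendsto_exp_neg_atTop_nhds_zero
    have h2 := (Complex.continuous_ofReal.tendsto 0).comp this
    simp only [Complex.ofReal_zero] at h2
    apply h2.congr
    intro y
    simp [Complex.ofReal_exp]
  -- y * exp(-y) → 0 in ℂ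
  have hyexp0 : Filter.Tendsto (fun y : ℝ => (y:ℂ) * Complex.exp (-(y:ℂ))) Filter.atTop (nhds 0) := by
    have : Filter.Tendsto (fun y : ℝ => y * Real.exp (-y)) Filter.atTop (nhds 0) := by
      have := Real.tendsto_pow_mul_exp_neg_atTop_nhds_zero 1
      simpa using this
    have h2 := (Complex.continuous_ofReal.tendsto 0).comp this
    simp only [Complex.ofReal_zero] at h2
    apply h2.congr
    intro y
    simp [Complex.ofReal_exp, Complex.ofReal_mul]
  -- key limit: c3 + c4 y → 0
  have hkey : Filter.Tendsto (fun y : ℝ => c3 + c4*(y:ℂ)) Filter.atTop (nhds 0) := by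
    have hident : ∀ y : ℝ, c3 + c4*(y:ℂ) =
        g0 y * Complex.exp (-(y:ℂ))
        - c1 * (Complex.exp (-(y:ℂ)) * Complex.exp (-(y:ℂ)))
        - c2 * (((y:ℂ) * Complex.exp (-(y:ℂ))) * Complex.exp (-(y:ℂ))) := by
      intro y
      have hmul : Complex.exp ((y:ℂ)) * Complex.exp (-(y:ℂ)) = 1 := by
        rw [← Complex.exp_add]; simp
      simp only [hg0]
      linear_combination -(c3 + c4*(y:ℂ)) * hmul
    have t1 : Filter.Tendsto (fun y : ℝ => g0 y * Complex.exp (-(y:ℂ))) Filter.atTop (nhds 0) := by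
      have := hgdecay.mul hexp0
      simpa using this
    have t2 : Filter.Tendsto (fun y : ℝ => c1 * (Complex.exp (-(y:ℂ)) * Complex.exp (-(y:ℂ))))
        Filter.atTop (nhds 0) := by
      have := (hexp0.mul hexp0).const_mul c1
      simpa using this
    have t3 : Filter.Tendsto (fun y : ℝ => c2 * (((y:ℂ) * Complex.exp (-(y:ℂ))) * Complex.exp (-(y:ℂ))))
        Filter.atTop (nhds 0) := by
      have := (hyexp0.mul hexp0).const_mul c2
      simpa using this
    have := (t1.sub t2).sub t3
    simp only [sub_zero] at this
    exact this.congr fun y => (hident y).symm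
  -- c4 = 0
  have hc4z : c4 = 0 := by
    have hshift : Filter.Tendsto (fun y : ℝ => c3 + c4*((y+1:ℝ):ℂ)) Filter.atTop (nhds 0) :=
      hkey.comp (Filter.tendsto_atTop_add_const_right _ 1 Filter.tendsto_id)
    have hdiff := hshift.sub hkey
    simp only [sub_zero] at hdiff
    have : Filter.Tendsto (fun _ : ℝ => c4) Filter.atTop (nhds 0) := by
      apply hdiff.congr
      intro y
      push_cast
      ring
    exact tendsto_nhds_unique tendsto_const_nhds this
  -- c3 = 0
  have hc3z : c3 = 0 := by
    have : Filter.Tendsto (fun _ : ℝ => c3) Filter.atTop (nhds 0) := by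
      apply hkey.congr
      intro y
      rw [hc4z]; ring
    exact tendsto_nhds_unique tendsto_const_nhds this
  -- extract linear relations
  have e20 : a2 = a0 := by linear_combination hbc1
  have e31 : a3 = a1 := by
    have h : (a3 - a1 + a2 - a0)/4 = 0 := by rw [← hc4]; exact hc4z
    linear_combination 4*h - e20
  have e10 : a1 = -a0 := by
    have h3 : (2*a0 + 3*a1 - a3)/4 = 0 := by rw [← hc3]; exact hc3z
    linear_combination 2*h3 + (1/2)*e31
  -- σ = 0
  have hsin : (0:ℝ) < Real.sin α := Real.sin_pos_of_pos_of_lt_pi hα.1 hα.2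
  have hσ : σ = 0 := by
    have hbc0' : (l + (b:ℂ) * (Real.sin α : ℂ)) * σ = 0 := by
      have : a1 - a3 = 0 := by rw [e31]; ring
      linear_combination hbc0 + (1/2 : ℂ) * (Real.sin α : ℂ) * this
    have hne : (l + (b:ℂ) * (Real.sin α : ℂ)) ≠ 0 := by
      intro h
      rw [show ((b:ℂ) * (Real.sin α:ℂ)) = ((b * Real.sin α : ℝ) : ℂ) by push_cast; ring] at h
      have h2 := congrArg Complex.re h
      rw [Complex.add_re, Complex.ofReal_re, Complex.zero_re] at h2
      nlinarith [mul_pos hb hsin]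
    exact (mul_eq_zero.mp hbc0').resolve_left hne
  -- all coefficients vanish
  have ha0z : a0 = 0 := by rw [hbc2]; exact hσ
  have hc1z : c1 = 0 := by
    rw [hc1, e31, e10, ha0z]; ring
  have hc2z : c2 = 0 := by
    rw [hc2, e31, e20, e10, ha0z]; ring
  refine ⟨fun y hy => ?_, hσ⟩
  rw [hveq y hy, hg0]
  simp only [hc1z, hc2z, hc3z, hc4z]
  ring
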